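/- Let Γ = Cay(G, S_{i,j} : 1 ≤ i,j ≤ m) be an m-Cayley digraph of a finite group G. Then Γ is mCI if and only if every semiregular subgroup of Aut(Γ) isomorphic to G (necessarily with m orbits) is conjugate to R(G) in Aut(Γ). -/

import Mathlib

/-- Right multiplication permutation `R(g) : x_i ↦ (xg)_i` on `V = Fin m × G`. -/
def Rperm (m : ℕ) {G : Type*} [Group G] (g : G) : Equiv.Perm (Fin m × G) where
  toFun v := (v.1, v.2 * g)
  invFun v := (v.1, v.2 * g⁻¹)
  left_inv v := by simp
  right_inv v := by simp

/-- The subgroup `R(G) = {R(g) : g ∈ G}` of `Sym(V)`. -/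
def RG (m : ℕ) (G : Type*) [Group G] : Subgroup (Equiv.Perm (Fin m × G)) where
  carrier := {σ | ∃ g : G, σ = Rperm m g}
  one_mem' := ⟨1, Equiv.ext fun v => by simp [Rperm]⟩
  mul_mem' := by
    rintro _ _ ⟨g, rfl⟩ ⟨h, rfl⟩
    exact ⟨h * g, Equiv.ext fun v => by simp [Rperm, mul_assoc]⟩
  inv_mem' := by
    rintro _ ⟨g, rfl⟩
    exact ⟨g⁻¹, Equiv.ext fun v => by
      simp [Rperm, Equiv.Perm.inv_def]⟩

/-- The arc relation of the `m`-Cayley digraph `Cay(G, S_{i,j})`: there is an arc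
from `x_i` to `(sx)_j` for each `s ∈ S_{i,j}`. -/
def arcRel (m : ℕ) {G : Type*} [Group G] (S : Fin m → Fin m → Set G)
    (u v : Fin m × G) : Prop :=
  v.2 * u.2⁻¹ ∈ S u.1 v.1

/-- The automorphism group of the `m`-Cayley digraph `Cay(G, S_{i,j})`, as a
subgroup of `Sym(V)`. -/
def digraphAut (m : ℕ) (G : Type*) [Group G] (S : Fin m → Fin m → Set G) :
    Subgroup (Equiv.Perm (Fin m × G)) where
  carrier := {e | ∀ u v : Fin m × G, arcRel m S (e u) (e v) ↔ arcRel m S u v}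
  one_mem' := by intro u v; simp
  mul_mem' := by
    intro a b ha hb u v
    have := (ha (b u) (b v)).trans (hb u v)
    simpa using this
  inv_mem' := by
    intro a ha u v
    have := ha (a⁻¹ u) (a⁻¹ v)
    simpa using this.symm

/-- The `m`-Cayley digraph `Cay(G, S_{i,j})` is mCI: every `m`-Cayley digraph of
`G` isomorphic to it is its image under an element of the normalizer of `R(G)`
in `Sym(V)`. -/
def IsMCI (m : ℕ) (G : Type*) [Group G] (S : Fin m → Fin m → Set G) : Prop :=
  ∀ T : Fin m → Fin m → Set G, (∀ i, (1 : G) ∉ T i i) →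
    (∃ e : Equiv.Perm (Fin m × G),
      ∀ u v : Fin m × G, arcRel m S u v ↔ arcRel m T (e u) (e v)) →
    ∃ n ∈ Subgroup.normalizer ((RG m G : Subgroup (Equiv.Perm (Fin m × G))) : Set (Equiv.Perm (Fin m × G))),
      ∀ u v : Fin m × G, arcRel m S u v ↔ arcRel m T (n u) (n v)

section Helpers

variable {G : Type*} [Group G] {m : ℕ}

lemma Rperm_apply (g : G) (v : Fin m × G) : Rperm m g v = (v.1, v.2 * g) := rfl

lemma Rperm_one : Rperm m (1 : G) = 1 := Equiv.ext fun v => by simp [Rperm]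

lemma Rperm_mul (g h : G) : Rperm m g * Rperm m h = Rperm m (h * g) :=
  Equiv.ext fun v => by simp [Rperm, mul_assoc]

lemma Rperm_inv (g : G) : (Rperm m g)⁻¹ = Rperm m g⁻¹ := Equiv.ext fun v => rfl

lemma mem_RG {σ : Equiv.Perm (Fin m × G)} : σ ∈ RG m G ↔ ∃ g : G, σ = Rperm m g := Iff.rfl

lemma mem_digraphAut {S : Fin m → Fin m → Set G} {x : Equiv.Perm (Fin m × G)} :
    x ∈ digraphAut m G S ↔ ∀ u v : Fin m × G, arcRel m S (x u) (x v) ↔ arcRel m S u v :=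
  Iff.rfl

lemma arcRel_Rperm (T : Fin m → Fin m → Set G) (g : G) (u v : Fin m × G) :
    arcRel m T (Rperm m g u) (Rperm m g v) ↔ arcRel m T u v := by
  simp [arcRel, Rperm, mul_assoc]

lemma Rperm_injective (hm : 0 < m) : Function.Injective (Rperm m (G := G)) := by
  intro g h hgh
  have := congrArg (fun σ : Equiv.Perm (Fin m × G) => (σ (⟨0, hm⟩, 1)).2) hgh
  simpa [Rperm] using this

lemma conj_map_conj_map {N : Type*} [Group N] (a b : N) (K : Subgroup N) :
    Subgroup.map (MulAut.conj a).toMonoidHom (Subgroup.map (MulAut.conj b).toMonoidHom K)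
      = Subgroup.map (MulAut.conj (a * b)).toMonoidHom K := by
  rw [Subgroup.map_map]
  congr 1
  ext x
  simp [MulAut.conj_apply, mul_assoc]

lemma conj_one_map {N : Type*} [Group N] (K : Subgroup N) :
    Subgroup.map (MulAut.conj (1 : N)).toMonoidHom K = K := by
  have : (MulAut.conj (1 : N)).toMonoidHom = MonoidHom.id N := by
    ext x; simp
  rw [this, Subgroup.map_id]

end Helpers

/-- **Babai-type criterion for mCI.** An `m`-Cayley digraph
`Γ = Cay(G, S_{i,j})` of a finite group `G` is mCI if and only if every
semiregular subgroup of `Aut(Γ)` isomorphic to `G` is conjugate to `R(G)` in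
`Aut(Γ)`. -/
theorem isMCI_iff_conjugate (G : Type*) [Group G] [Finite G] (m : ℕ)
    (S : Fin m → Fin m → Set G) (hS : ∀ i, (1 : G) ∉ S i i) :
    IsMCI m G S ↔
      ∀ H : Subgroup (Equiv.Perm (Fin m × G)), H ≤ digraphAut m G S →
        (∀ h ∈ H, ∀ v : Fin m × G, h v = v → h = 1) →
        Nonempty (H ≃* G) →
        ∃ a ∈ digraphAut m G S,
          Subgroup.map (MulAut.conj a).toMonoidHom (RG m G) = H := by
  rcases Nat.eq_zero_or_pos m with hm | hm
  · -- trivial case `m = 0`: the vertex set is empty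
    subst hm
    have hone : ∀ σ : Equiv.Perm (Fin 0 × G), σ = 1 := fun σ =>
      Equiv.ext fun v => absurd v.1.2 (by omega)
    refine iff_of_true ?_ ?_
    · intro T _ _
      exact ⟨1, Subgroup.one_mem _, fun u => absurd u.1.2 (by omega)⟩
    · intro H _ _ _
      refine ⟨1, Subgroup.one_mem _, ?_⟩
      ext x
      rw [hone x]
      exact iff_of_true ⟨1, Subgroup.one_mem _, by simp⟩ (Subgroup.one_mem _)
  constructor
  · -- mCI ⟹ conjugacy criterion
    intro hMCI H hH hsemi hne
    obtain ⟨φ⟩ := hne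
    -- the orbit equivalence relation of `H` on the vertex set
    letI r : Setoid (Fin m × G) :=
      ⟨fun u v => ∃ h : H, (h : Equiv.Perm (Fin m × G)) u = v,
        ⟨fun u => ⟨1, by simp⟩,
         fun {u v} h => by
          obtain ⟨h, rfl⟩ := h
          exact ⟨h⁻¹, by simp⟩,
         fun {u v w} h1 h2 => by
          obtain ⟨h1, rfl⟩ := h1
          obtain ⟨h2, rfl⟩ := h2
          exact ⟨h2 * h1, by simp⟩⟩⟩
    -- semiregularity: uniqueness of the element carrying a point to another
    have huniq : ∀ (h h' : H) (w : Fin m × G),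
        (h : Equiv.Perm (Fin m × G)) w = (h' : Equiv.Perm (Fin m × G)) w → h = h' := by
      intro h h' w hw
      have h0 : ((h'⁻¹ * h : H) : Equiv.Perm (Fin m × G)) w = w := by
        simp [Equiv.Perm.mul_apply, hw]
      have h1 := hsemi _ (SetLike.coe_mem (h'⁻¹ * h)) w h0
      have h2 : h'⁻¹ * h = 1 := by
        exact_mod_cast h1
      exact (inv_mul_eq_one.mp h2).symm
    -- transversal of the orbits
    have hrel := fun v : Fin m × G => Quotient.exact (Quotient.out_eq (⟦v⟧ : Quotient r))
    choose hfun hspec using hrel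
    -- counting: there are exactly `m` orbits
    have hcardΩ : Nat.card (Quotient r) = m := by
      let f : Quotient r × G → Fin m × G :=
        fun p => ((φ.symm p.2⁻¹ : H) : Equiv.Perm (Fin m × G)) p.1.out
      have hf1 : ∀ p : Quotient r × G, (⟦f p⟧ : Quotient r) = p.1 := by
        intro p
        have : (⟦f p⟧ : Quotient r) = ⟦p.1.out⟧ :=
          Quotient.sound ⟨(φ.symm p.2⁻¹)⁻¹, by simp [f]⟩
        rw [this, Quotient.out_eq]
      have finj : Function.Injective f := by
        intro p q hpq
        have hω : p.1 = q.1 := by rw [← hf1 p, ← hf1 q, hpq]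
        have hg : φ.symm p.2⁻¹ = φ.symm q.2⁻¹ := by
          apply huniq _ _ p.1.out
          calc ((φ.symm p.2⁻¹ : H) : Equiv.Perm (Fin m × G)) p.1.out = f p := rfl
            _ = f q := hpq
            _ = ((φ.symm q.2⁻¹ : H) : Equiv.Perm (Fin m × G)) q.1.out := rfl
            _ = ((φ.symm q.2⁻¹ : H) : Equiv.Perm (Fin m × G)) p.1.out := by rw [hω]
        have : p.2⁻¹ = q.2⁻¹ := φ.symm.injective hg
        exact Prod.ext hω (inv_injective this)
      have fsurj : Function.Surjective f := by
        intro v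
        refine ⟨(⟦v⟧, (φ (hfun v))⁻¹), ?_⟩
        show ((φ.symm ((φ (hfun v))⁻¹)⁻¹ : H) : Equiv.Perm (Fin m × G)) (⟦v⟧ : Quotient r).out = v
        rw [inv_inv, φ.symm_apply_apply]
        exact hspec v
      have hcc := Nat.card_congr (Equiv.ofBijective f ⟨finj, fsurj⟩)
      rw [Nat.card_prod, Nat.card_prod, Nat.card_eq_fintype_card (α := Fin m),
        Fintype.card_fin] at hcc
      exact Nat.eq_of_mul_eq_mul_right Nat.card_pos hcc
    have ι : Quotient r ≃ Fin m := Finite.equivFinOfCardEq hcardΩ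
    -- the relabeling permutation `e`
    have einj : Function.Injective
        (fun v : Fin m × G => ((ι ⟦v⟧, (φ (hfun v))⁻¹) : Fin m × G)) := by
      intro u v huv
      have hq : (⟦u⟧ : Quotient r) = ⟦v⟧ := ι.injective (congrArg Prod.fst huv)
      have hh : hfun u = hfun v :=
        φ.injective (inv_injective (congrArg Prod.snd huv))
      rw [← hspec u, ← hspec v, hq, hh]
    let e : Equiv.Perm (Fin m × G) :=
      Equiv.ofBijective _ (Finite.injective_iff_bijective.mp einj)
    have he_apply : ∀ v : Fin m × G, e v = (ι ⟦v⟧, (φ (hfun v))⁻¹) := fun v => rfl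
    -- equivariance of the labelling
    have hhf : ∀ (h : H) (v : Fin m × G),
        hfun ((h : Equiv.Perm (Fin m × G)) v) = h * hfun v := by
      intro h v
      have hq : (⟦(h : Equiv.Perm (Fin m × G)) v⟧ : Quotient r) = ⟦v⟧ :=
        Quotient.sound ⟨h⁻¹, by simp⟩
      apply huniq _ _ (⟦v⟧ : Quotient r).out
      have h1 := hspec ((h : Equiv.Perm (Fin m × G)) v)
      rw [hq] at h1
      rw [h1]
      simp [Equiv.Perm.mul_apply, hspec v]
    -- `e` conjugates `H` onto `R(G)`
    have hconj : ∀ h : H, e * (h : Equiv.Perm (Fin m × G)) * e⁻¹ = Rperm m (φ h)⁻¹ := by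
      intro h
      apply Equiv.ext
      intro x
      have hx : e (e.symm x) = x := e.apply_symm_apply x
      have hq : (⟦(h : Equiv.Perm (Fin m × G)) (e.symm x)⟧ : Quotient r) = ⟦e.symm x⟧ :=
        Quotient.sound ⟨h⁻¹, by simp⟩
      show e ((h : Equiv.Perm (Fin m × G)) (e.symm x)) = Rperm m (φ h)⁻¹ x
      conv_rhs => rw [← hx]
      rw [he_apply (e.symm x), he_apply ((h : Equiv.Perm (Fin m × G)) (e.symm x)),
        hhf h (e.symm x), hq]
      simp [Rperm_apply, mul_inv_rev]
    have hconjg : ∀ g : G,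
        e⁻¹ * Rperm m g * e = ((φ.symm g⁻¹ : H) : Equiv.Perm (Fin m × G)) := by
      intro g
      have h1 := hconj (φ.symm g⁻¹)
      rw [φ.apply_symm_apply, inv_inv] at h1
      rw [← h1]
      group
    -- the connection sets of the relabelled digraph
    set T : Fin m → Fin m → Set G :=
      fun i j => {g | arcRel m S (e.symm (i, 1)) (e.symm (j, g))} with hTdef
    have hT1 : ∀ i, (1 : G) ∉ T i i := by
      intro i hmem
      have h2 : (e.symm (i, (1:G))).2 * (e.symm (i, (1:G))).2⁻¹
          ∈ S (e.symm (i, (1:G))).1 (e.symm (i, (1:G))).1 := hmem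
      simp only [mul_inv_cancel] at h2
      exact hS _ h2
    have htrans : ∀ (g : G) (a b : Fin m × G),
        arcRel m S (e.symm (Rperm m g a)) (e.symm (Rperm m g b)) ↔
          arcRel m S (e.symm a) (e.symm b) := by
      intro g a b
      have h1 : ∀ x, e.symm (Rperm m g x)
          = ((φ.symm g⁻¹ : H) : Equiv.Perm (Fin m × G)) (e.symm x) := by
        intro x
        have h2 := congrArg (fun σ : Equiv.Perm (Fin m × G) => σ (e.symm x)) (hconjg g)
        simpa [Equiv.Perm.mul_apply] using h2
      rw [h1 a, h1 b]
      exact mem_digraphAut.mp (hH (SetLike.coe_mem _)) (e.symm a) (e.symm b)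
    have keylemma : ∀ u v : Fin m × G,
        arcRel m T u v ↔ arcRel m S (e.symm u) (e.symm v) := by
      intro u v
      have h1 := htrans u.2 (u.1, 1) (v.1, v.2 * u.2⁻¹)
      have h2 : Rperm m u.2 ((u.1, (1:G)) : Fin m × G) = u := by simp [Rperm_apply]
      have h3 : Rperm m u.2 ((v.1, v.2 * u.2⁻¹) : Fin m × G) = v := by simp [Rperm_apply]
      rw [h2, h3] at h1
      exact h1.symm
    have hiso : ∀ u v : Fin m × G, arcRel m S u v ↔ arcRel m T (e u) (e v) := by
      intro u v
      have h1 := keylemma (e u) (e v)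
      rw [Equiv.symm_apply_apply, Equiv.symm_apply_apply] at h1
      exact h1.symm
    obtain ⟨n, hn, hniso⟩ := hMCI T hT1 ⟨e, hiso⟩
    refine ⟨e⁻¹ * n, ?_, ?_⟩
    · rw [mem_digraphAut]
      intro u v
      have h1 : ∀ w : Fin m × G, (e⁻¹ * n) w = e.symm (n w) := fun w => rfl
      rw [h1 u, h1 v]
      exact (keylemma (n u) (n v)).symm.trans (hniso u v).symm
    · ext x
      rw [Subgroup.mem_map]
      constructor
      · rintro ⟨σ, hσ, rfl⟩
        obtain ⟨g, rfl⟩ := hσ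
        obtain ⟨g', hg'⟩ := (Subgroup.mem_normalizer_iff.mp hn (Rperm m g)).mp ⟨g, rfl⟩
        have h2 : (MulAut.conj (e⁻¹ * n)).toMonoidHom (Rperm m g)
            = e⁻¹ * Rperm m g' * e := by
          simp only [MulEquiv.coe_toMonoidHom, MulAut.conj_apply]
          rw [← hg']
          group
        rw [h2, hconjg g']
        exact SetLike.coe_mem _
      · intro hx
        refine ⟨(e⁻¹ * n)⁻¹ * x * (e⁻¹ * n), ?_, by
          simp [MulAut.conj_apply, mul_assoc]⟩
        have h3 := hconj ⟨x, hx⟩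
        have h4 : (e⁻¹ * n)⁻¹ * x * (e⁻¹ * n) = n⁻¹ * Rperm m (φ ⟨x, hx⟩)⁻¹ * n := by
          rw [← h3]
          group
        rw [h4]
        have h5 := Subgroup.mem_normalizer_iff.mp
          ((Subgroup.normalizer ((RG m G : Set (Equiv.Perm (Fin m × G))))).inv_mem hn) (Rperm m (φ ⟨x, hx⟩)⁻¹)
        rw [inv_inv] at h5
        exact h5.mp ⟨(φ ⟨x, hx⟩)⁻¹, rfl⟩
  · -- conjugacy criterion ⟹ mCI
    intro cond T hT1 he'
    obtain ⟨e, he⟩ := he'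
    -- `H := e⁻¹ R(G) e`
    set H := Subgroup.map (MulAut.conj e⁻¹).toMonoidHom (RG m G) with hHdef
    have hmemH : ∀ x, x ∈ H ↔ ∃ g : G, x = e⁻¹ * Rperm m g * e := by
      intro x
      rw [hHdef, Subgroup.mem_map]
      constructor
      · rintro ⟨σ, ⟨g, rfl⟩, rfl⟩
        exact ⟨g, by simp [MulAut.conj_apply, mul_assoc]⟩
      · rintro ⟨g, rfl⟩
        exact ⟨Rperm m g, ⟨g, rfl⟩, by simp [MulAut.conj_apply, mul_assoc]⟩
    have hHle : H ≤ digraphAut m G S := by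
      intro x hx
      obtain ⟨g, rfl⟩ := (hmemH x).mp hx
      rw [mem_digraphAut]
      intro u v
      have h1 := he (e.symm (Rperm m g (e u))) (e.symm (Rperm m g (e v)))
      rw [Equiv.apply_symm_apply, Equiv.apply_symm_apply] at h1
      have h2 : ∀ w : Fin m × G, (e⁻¹ * Rperm m g * e) w = e.symm (Rperm m g (e w)) :=
        fun w => rfl
      rw [h2 u, h2 v]
      exact h1.trans ((arcRel_Rperm T g (e u) (e v)).trans (he u v).symm)
    have hsemiH : ∀ x ∈ H, ∀ v : Fin m × G, x v = v → x = 1 := by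
      intro x hx v hv
      obtain ⟨g, rfl⟩ := (hmemH x).mp hx
      have h3 : Rperm m g (e v) = e v := by
        have := congrArg e hv
        simpa [Equiv.Perm.mul_apply] using this
      have h4 : (e v).2 * g = (e v).2 := congrArg Prod.snd h3
      have h5 : g = 1 := by
        have := mul_eq_left.mp h4
        exact this
      subst h5
      simp [Rperm_one]
    have hisoG : Nonempty (H ≃* G) := by
      refine ⟨?_⟩
      let ψ : G →* Equiv.Perm (Fin m × G) :=
        { toFun := fun g => e⁻¹ * Rperm m g⁻¹ * e
          map_one' := by simp [Rperm_one]
          map_mul' := by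
            intro g h
            simp only [mul_inv_rev, ← Rperm_mul]
            group }
      have hinj : Function.Injective ψ := by
        intro g g' hgg'
        have h1 : Rperm m g⁻¹ = Rperm m g'⁻¹ := by
          have := hgg'
          simp only [ψ, MonoidHom.coe_mk, OneHom.coe_mk] at this
          have h2 := mul_right_cancel this
          exact mul_left_cancel h2
        have := Rperm_injective hm h1
        exact inv_injective this
      have hrange : ψ.range = H := by
        ext x
        rw [MonoidHom.mem_range, hmemH]
        constructor
        · rintro ⟨g, rfl⟩; exact ⟨g⁻¹, rfl⟩
        · rintro ⟨g, rfl⟩; exact ⟨g⁻¹, by simp [ψ]⟩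
      exact (MulEquiv.subgroupCongr hrange.symm).trans (MonoidHom.ofInjective hinj).symm
    obtain ⟨a, ha, hmap⟩ := cond H hHle hsemiH hisoG
    have hmapn : Subgroup.map (MulAut.conj (e * a)).toMonoidHom (RG m G) = RG m G := by
      rw [← conj_map_conj_map e a, hmap, hHdef, conj_map_conj_map, mul_inv_cancel,
        conj_one_map]
    have hnorm : e * a ∈ Subgroup.normalizer (RG m G) := by
      rw [Subgroup.mem_normalizer_iff]
      intro h
      constructor
      · intro hh
        rw [← hmapn]
        exact ⟨h, hh, by simp [MulAut.conj_apply, mul_assoc]⟩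
      · intro hh
        rw [← hmapn] at hh
        obtain ⟨h', hh', heq⟩ := hh
        simp only [MulEquiv.coe_toMonoidHom, MulAut.conj_apply] at heq
        have : h' = h := by
          have := mul_right_cancel heq
          exact mul_left_cancel this
        rwa [← this]
    refine ⟨e * a, hnorm, ?_⟩
    intro u v
    have haAut := (mem_digraphAut.mp ha) u v
    have : (e * a) u = e (a u) := rfl
    rw [this, show (e * a) v = e (a v) from rfl]
    exact haAut.symm.trans (he (a u) (a v))
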